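/- For every positive integer n, 2 * (2^(2n) - 1) * (2n-1)! * zeta(2n) / pi^(2n) is an integer, where zeta denotes the Riemann zeta function. -/

import Mathlib

open PowerSeries Nat

noncomputable def EE : PowerSeries ℚ := rescale (2:ℚ) (exp ℚ)
noncomputable def TT : PowerSeries ℚ := (EE - 1) * (EE + 1)⁻¹

lemma constCoeff_EE : constantCoeff EE = 1 := by
  simp [EE, ← coeff_zero_eq_constantCoeff_apply, coeff_rescale, coeff_exp]

lemma constCoeff_EE1 : constantCoeff (EE + 1) = 2 := by
  simp [constCoeff_EE]; norm_num

lemma hTT : (EE + 1) * TT = EE - 1 := by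
  rw [TT, mul_comm (EE - 1), ← mul_assoc, PowerSeries.mul_inv_cancel, one_mul]
  rw [constCoeff_EE1]; norm_num

lemma derivEE : d⁄dX ℚ EE = 2 * EE := by
  ext n
  rw [coeff_derivative, show (2 : ℚ⟦X⟧) = C 2 from rfl, coeff_C_mul]
  simp only [EE, coeff_rescale, coeff_exp, eq_ratCast, Rat.cast_div, Rat.cast_one,
    Rat.cast_natCast, Nat.factorial_succ, pow_succ]
  have h1 : ((Nat.factorial n : ℚ)) ≠ 0 := by exact_mod_cast (Nat.factorial_pos n).ne'
  have h2 : ((n : ℚ) + 1) ≠ 0 := by positivity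
  push_cast
  field_simp

lemma derivTT : d⁄dX ℚ TT = 1 - TT ^ 2 := by
  have hne : EE + 1 ≠ 0 := fun h => by simpa [h] using constCoeff_EE1
  have key : (EE + 1) * d⁄dX ℚ TT = (EE + 1) * (1 - TT ^ 2) := by
    have hd := congrArg (d⁄dX ℚ) hTT
    rw [Derivation.leibniz, map_sub, map_add, derivEE] at hd
    simp only [map_one, smul_eq_mul, add_zero, sub_zero, Derivation.map_one_eq_zero] at hd
    have h2 : (EE + 1) * (1 + TT) = 2 * EE := by
      rw [mul_add, mul_one, hTT]; ring
    have h3 : (EE + 1) * (1 - TT ^ 2) = (2 * EE) * (1 - TT) := by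
      calc (EE + 1) * (1 - TT ^ 2) = ((EE + 1) * (1 + TT)) * (1 - TT) := by ring
        _ = (2 * EE) * (1 - TT) := by rw [h2]
    rw [h3]
    linear_combination hd
  exact mul_left_cancel₀ hne key

lemma constCoeff_TT : constantCoeff TT = 0 := by
  have := congrArg (constantCoeff) hTT
  rw [map_mul, constCoeff_EE1, map_sub, constCoeff_EE, map_one, sub_self] at this
  linarith [this]
lemma coeff_TT_int (m : ℕ) : ((m)! : ℚ) * coeff m TT ∈ (Int.castRingHom ℚ).range := by
  induction m using Nat.strong_induction_on with
  | _ m ih =>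
    match m with
    | 0 =>
      rw [coeff_zero_eq_constantCoeff, constCoeff_TT]
      exact ⟨0, by simp⟩
    | (m+1) =>
      have h := congrArg (coeff m) derivTT
      rw [coeff_derivative, map_sub, coeff_one, pow_two, coeff_mul] at h
      have key : ((m+1)! : ℚ) * coeff (m+1) TT
          = (m ! : ℚ) * (if m = 0 then 1 else 0)
            - ∑ p ∈ Finset.HasAntidiagonal.antidiagonal m, (m.choose p.1 : ℚ) *
              (((p.1)! : ℚ) * coeff p.1 TT) * (((p.2)! : ℚ) * coeff p.2 TT) := by
        have hsum : ∀ p ∈ Finset.HasAntidiagonal.antidiagonal m,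
            (m.choose p.1 : ℚ) * (((p.1)! : ℚ) * coeff p.1 TT) *
              (((p.2)! : ℚ) * coeff p.2 TT)
            = (m ! : ℚ) * (coeff p.1 TT * coeff p.2 TT) := by
          intro p hp
          rw [Finset.HasAntidiagonal.mem_antidiagonal] at hp
          have : (m.choose p.1) * (p.1)! * (p.2)! = m ! := by
            subst hp
            have := Nat.choose_mul_factorial_mul_factorial (Nat.le_add_right p.1 p.2)
            simpa using this
          have hc : ((m.choose p.1 : ℚ)) * ((p.1)! : ℚ) * ((p.2)! : ℚ) = (m ! : ℚ) := by
            exact_mod_cast congrArg (Nat.cast (R := ℚ)) this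
          linear_combination coeff p.1 TT * coeff p.2 TT * hc
        rw [Finset.sum_congr rfl hsum, ← Finset.mul_sum, factorial_succ]
        push_cast
        linear_combination (m ! : ℚ) * h
      rw [key]
      apply sub_mem
      · refine mul_mem ⟨(m ! : ℤ), by simp⟩ ?_
        split_ifs
        · exact ⟨1, by simp⟩
        · exact ⟨0, by simp⟩
      · apply Subring.sum_mem
        intro p hp
        rw [Finset.HasAntidiagonal.mem_antidiagonal] at hp
        exact mul_mem (mul_mem ⟨(m.choose p.1 : ℤ), by simp⟩
          (ih p.1 (by omega))) (ih p.2 (by omega))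
noncomputable abbrev BB : PowerSeries ℚ := bernoulliPowerSeries ℚ

lemma XTT : X * TT = X + rescale (4:ℚ) BB - rescale (2:ℚ) BB := by
  have hE2 : EE * EE = rescale (4:ℚ) (exp ℚ) := by
    rw [EE, exp_mul_exp_eq_exp_add]; norm_num
  have hd : EE * EE - 1 ≠ 0 := by
    intro h
    have := congrArg (coeff 1) h
    rw [hE2, map_sub, coeff_rescale, coeff_exp, coeff_one] at this
    simp [Nat.factorial] at this
  apply mul_right_cancel₀ hd
  have hB2 : rescale (2:ℚ) BB * (EE - 1) = 2 * X := by
    have h := congrArg (rescale (2:ℚ)) (bernoulliPowerSeries_mul_exp_sub_one ℚ)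
    rw [map_mul, map_sub, map_one, rescale_X] at h
    rw [BB, EE, h, map_ofNat]
  have hB4 : rescale (4:ℚ) BB * (EE * EE - 1) = 4 * X := by
    have h := congrArg (rescale (4:ℚ)) (bernoulliPowerSeries_mul_exp_sub_one ℚ)
    rw [map_mul, map_sub, map_one, rescale_X] at h
    rw [BB, hE2, h, map_ofNat]
  linear_combination (X * (EE - 1)) * hTT - hB4 + (EE + 1) * hB2

/-- The main rational-number identity: `2^{2n}(2^{2n}-1) B_{2n}/(2n)` is an integer. -/
lemma bernoulli_int (n : ℕ) (hn : 0 < n) :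
    ∃ z : ℤ, (z : ℚ) * (2 * n) = 2 ^ (2 * n) * (2 ^ (2 * n) - 1) * bernoulli (2 * n) := by
  obtain ⟨z, hz⟩ := coeff_TT_int (2 * n - 1)
  refine ⟨z, ?_⟩
  have h2n : 2 * n - 1 + 1 = 2 * n := by omega
  have hcoeff : coeff (2 * n - 1) TT
      = 2 ^ (2 * n) * (2 ^ (2 * n) - 1) * bernoulli (2 * n) / (2 * n)! := by
    have h := congrArg (coeff (2 * n)) XTT
    rw [← h2n, coeff_succ_X_mul, map_sub, map_add, coeff_X, coeff_rescale, coeff_rescale] at h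
    rw [h2n] at h
    have hne : ¬ (2 * n = 1) := by omega
    rw [if_neg hne] at h
    simp only [BB, bernoulliPowerSeries, coeff_mk, eq_ratCast, Rat.cast_div] at h
    rw [h]
    have h4 : (4 : ℚ) ^ (2 * n) = 2 ^ (2 * n) * 2 ^ (2 * n) := by
      rw [show (4:ℚ) = 2 * 2 by norm_num, mul_pow]
    push_cast
    rw [h4]
    ring
  have hz' : (z : ℚ) = ((2 * n - 1)! : ℚ) * coeff (2 * n - 1) TT := hz
  have hfacQ : ((2 * n)! : ℚ) = (2 * (n:ℚ)) * ((2 * n - 1)! : ℚ) := by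
    rw [← Nat.mul_factorial_pred (by omega : 2 * n ≠ 0)]
    push_cast
    ring
  have hnne : ((n:ℚ)) ≠ 0 := Nat.cast_ne_zero.mpr hn.ne'
  have hfacne : ((2 * n - 1)! : ℚ) ≠ 0 := by
    exact_mod_cast (Nat.factorial_pos _).ne'
  rw [hz', hcoeff, hfacQ]
  field_simp

theorem zeta_even_int (n : ℕ) (hn : 0 < n) :
    ∃ m : ℤ, 2 * ((2 : ℂ) ^ (2 * n) - 1) * (Nat.factorial (2 * n - 1)) *
      riemannZeta (2 * n) / (Real.pi : ℂ) ^ (2 * n) = (m : ℂ) := by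
  obtain ⟨z, hz⟩ := bernoulli_int n hn
  refine ⟨(-1) ^ (n + 1) * z, ?_⟩
  have hζ := riemannZeta_two_mul_nat (k := n) hn.ne'
  rw [hζ]
  have hπ : (Real.pi : ℂ) ^ (2 * n) ≠ 0 :=
    pow_ne_zero _ (Complex.ofReal_ne_zero.mpr Real.pi_ne_zero)
  have hfacne2 : (((2 * n)! : ℕ) : ℂ) ≠ 0 := by
    exact_mod_cast (Nat.factorial_pos _).ne'
  have hfac : (((2 * n)! : ℕ) : ℂ) = (2 * (n:ℂ)) * (((2 * n - 1)! : ℕ) : ℂ) := by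
    rw [← Nat.mul_factorial_pred (by omega : 2 * n ≠ 0)]
    push_cast
    ring
  have hzC : (z : ℂ) * (2 * n) = 2 ^ (2 * n) * (2 ^ (2 * n) - 1) * (bernoulli (2 * n) : ℂ) := by
    exact_mod_cast congrArg (Rat.cast (K := ℂ)) hz
  have h2 : (2 : ℂ) ^ (2 * n) = 2 * 2 ^ (2 * n - 1) := by
    conv_lhs => rw [show 2 * n = (2 * n - 1) + 1 by omega]
    rw [_root_.pow_succ']
  field_simp
  rw [hfac]
  push_cast
  linear_combination (-((-1:ℂ) ^ (n+1) * (((2*n-1)! : ℕ):ℂ))) * hzC +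
    (-((-1:ℂ) ^ (n+1) * (((2*n-1)! : ℕ):ℂ) * ((2:ℂ)^(2*n) - 1) *
      (bernoulli (2*n) : ℂ))) * h2
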